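/- arXiv:math/0610823 — 2 statements merged into one kernel-verified Lean document; each statement's English description precedes it below -/
import Mathlib

section
/- Let a ∈ A, let d := |R⁺_a| ∈ ℕ ∪ {∞}, let m ∈ ℕ₀ with m < d, let (i_1, …, i_m) ∈ N^m, let w be the σ-composite of the word (i_1, …, i_m) at a, and let b := i_1⋯i_m ▷ a be its target. If w(α_{i,a}) ∈ −R⁺_b, then w(α_{j,a}) ∈ R⁺_b. -/
open Pointwise

variable {N : Type*} {A : Type*}

/-- The element `(i j)^m ▷ a` for the action of `F₂(N)` on `A`. -/
def altIter (act : N → A → A) (i j : N) (a : A) : ℕ → A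
  | 0 => a
  | m + 1 => act i (act j (altIter act i j a m))

/-- The set `Θ(i,j;a)`. -/
def ThetaSet (act : N → A → A) (i j : N) (a : A) : Set A :=
  {x | ∃ m : ℕ, x = altIter act i j a m ∨ x = altIter act j i a m}

/-- The set of `ℕ₀`-linear combinations of elements of `s`. -/
def NSpan (s : Set (N →₀ ℝ)) : Set (N →₀ ℝ) :=
  (AddSubmonoid.closure s : Set (N →₀ ℝ))

/-- A generalized root system: a transitive action of `F₂(N)` on `A` (axiom (1)),
roots `root a ⊆ ℝ^{(N)}` with simple roots `α n a` forming a basis (axiom (2)),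
and maps `σ i a ∈ GL(ℝ^{(N)})`, satisfying axioms (3)-(7). -/
structure GRS (N : Type*) (A : Type*) where
  act : N → A → A
  act_invol : ∀ n a, act n (act n a) = a
  act_trans : ∀ a b : A, ∃ l : List N, l.foldr act a = b
  root : A → Set (N →₀ ℝ)
  α : N → A → N →₀ ℝ
  α_mem : ∀ n a, α n a ∈ root a
  α_indep : ∀ a, LinearIndependent ℝ fun n => α n a
  α_span : ∀ a, Submodule.span ℝ (Set.range fun n => α n a) = ⊤
  σ : N → A → (N →₀ ℝ) ≃ₗ[ℝ] (N →₀ ℝ)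
  ax3 : ∀ a, root a =
    root a ∩ NSpan (Set.range fun n => α n a) ∪ -(root a ∩ NSpan (Set.range fun n => α n a))
  ax4 : ∀ i a, (Set.range fun r : ℝ => r • α i a) ∩ root a = {α i a, -α i a}
  ax5_root : ∀ i a, ⇑(σ i a) '' root a = root (act i a)
  ax5_diag : ∀ i a, σ i a (α i a) = -α i (act i a)
  ax5_off : ∀ i a j, j ≠ i →
    ∃ m : ℕ, σ i a (α j a) = α j (act i a) + (m : ℝ) • α i (act i a)
  ax6 : ∀ i a v, σ i (act i a) (σ i a v) = v
  ax7 : ∀ a (i j : N), i ≠ j →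
    (root a ∩ {β | ∃ p q : ℕ, β = (p : ℝ) • α i a + (q : ℝ) • α j a}).Finite →
    (ThetaSet act i j a).Finite ∧
      (ThetaSet act i j a).ncard ∣
        (root a ∩ {β | ∃ p q : ℕ, β = (p : ℝ) • α i a + (q : ℝ) • α j a}).ncard

/-- The positive roots `R⁺_a`. -/
def GRS.pos (G : GRS N A) (a : A) : Set (N →₀ ℝ) :=
  G.root a ∩ NSpan (Set.range fun n => G.α n a)

/-- The target `i₁ ⋯ i_m ▷ a` of the word `(i₁, …, i_m)` at `a`. -/
def GRS.target (G : GRS N A) (l : List N) (a : A) : A :=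
  l.foldr G.act a

/-- The σ-composite `σ_{i₁,b₁} ∘ ⋯ ∘ σ_{i_m,b_m}` of the word `(i₁, …, i_m)` at `a`. -/
noncomputable def GRS.wmap (G : GRS N A) : List N → A → (N →₀ ℝ) ≃ₗ[ℝ] (N →₀ ℝ)
  | [], _ => LinearEquiv.refl ℝ _
  | i :: l, a => (G.wmap l a).trans (G.σ i (G.target l a))

/-- The length `ℓ` of a word at `a`: the minimal length of a word at `a`
with the same target and the same σ-composite. -/
noncomputable def GRS.len (G : GRS N A) (l : List N) (a : A) : ℕ :=
  sInf {m | ∃ l' : List N, l'.length = m ∧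
    G.target l' a = G.target l a ∧ G.wmap l' a = G.wmap l a}

/-- A word of length `m` at `a` is reduced if `ℓ = m`. -/
def GRS.Reduced (G : GRS N A) (l : List N) (a : A) : Prop :=
  G.len l a = l.length

/-- `m_{i,j;a} = |R_a ∩ (ℕ₀ α_{i,a} + ℕ₀ α_{j,a})|`. -/
noncomputable def GRS.mij (G : GRS N A) (i j : N) (a : A) : ℕ :=
  (G.root a ∩ {β | ∃ p q : ℕ, β = (p : ℝ) • G.α i a + (q : ℝ) • G.α j a}).ncard

/-- The alternating word `(i₁, …, i_m)` with `i_k = i` for `k` odd (leftmost letter `i`). -/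
def altList (i j : N) : ℕ → List N
  | 0 => []
  | m + 1 => i :: altList j i m

/-- The alternating word of length `m` in the letters `i,j` whose rightmost letter is `i`. -/
def altR (i j : N) : ℕ → List N
  | 0 => []
  | m + 1 => altR j i m ++ [i]

/-- `a_m = i_m ⋯ i_1 ▷ a` for the alternating sequence with `i_k = i` for odd `k`. -/
def aIter (act : N → A → A) (i j : N) (a : A) : ℕ → A
  | 0 => a
  | m + 1 => act (if m % 2 = 0 then i else j) (aIter act i j a m)

/-- The set of real roots `R^{re}_a`. -/
def GRS.reroot (G : GRS N A) (a : A) : Set (N →₀ ℝ) :=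
  {β | ∃ (b : A) (l : List N) (n : N), G.target l b = a ∧ β = G.wmap l b (G.α n b)}

/-- The word `C(i,j;a)`: alternating of length `m_{i,j;a} - 1` with leftmost letter `i`. -/
noncomputable def GRS.Cword (G : GRS N A) (i j : N) (a : A) : List N :=
  altList i j (G.mij i j a - 1)

section AuxLemmas

variable (G : GRS N A)

lemma GRS.mem_nspan (i j : N) (hN : ∀ n : N, n = i ∨ n = j) (a : A) {β : N →₀ ℝ} :
    β ∈ NSpan (Set.range fun n => G.α n a) ↔
      ∃ p q : ℕ, β = (p : ℝ) • G.α i a + (q : ℝ) • G.α j a := by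
  have hr : (Set.range fun n => G.α n a) = {G.α i a, G.α j a} := by
    ext x
    constructor
    · rintro ⟨n, rfl⟩
      rcases hN n with rfl | rfl
      · exact Or.inl rfl
      · exact Or.inr rfl
    · rintro (rfl | rfl)
      exacts [⟨i, rfl⟩, ⟨j, rfl⟩]
  rw [NSpan, hr]
  constructor
  · intro h
    obtain ⟨p, q, h⟩ := (AddSubmonoid.mem_closure_pair _ _ _).1 h
    exact ⟨p, q, by rw [← h]; simp [Nat.cast_smul_eq_nsmul]⟩
  · rintro ⟨p, q, rfl⟩
    exact (AddSubmonoid.mem_closure_pair _ _ _).2 ⟨p, q, by simp [Nat.cast_smul_eq_nsmul]⟩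

lemma GRS.coeff_eq_zero (i j : N) (hij : i ≠ j) (a : A) {c d : ℝ}
    (h : c • G.α i a + d • G.α j a = 0) : c = 0 ∧ d = 0 := by
  have hinj : Function.Injective ![i, j] := by
    intro x y hxy
    fin_cases x <;> fin_cases y <;> simp_all
  have h2 : LinearIndependent ℝ ![G.α i a, G.α j a] := by
    have h3 := (G.α_indep a).comp ![i, j] hinj
    have he : (fun n => G.α n a) ∘ ![i, j] = ![G.α i a, G.α j a] := by
      funext x; fin_cases x <;> rfl
    rwa [he] at h3
  exact LinearIndependent.pair_iff.1 h2 c d h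

lemma GRS.zero_not_mem (i : N) (a : A) : (0 : N →₀ ℝ) ∉ G.root a := by
  intro h0
  have hi : (0 : N →₀ ℝ) ∈ (Set.range fun r : ℝ => r • G.α i a) ∩ G.root a :=
    ⟨⟨0, by simp⟩, h0⟩
  rw [G.ax4 i a] at hi
  have hne : G.α i a ≠ 0 := (G.α_indep a).ne_zero i
  simp only [Set.mem_insert_iff, Set.mem_singleton_iff] at hi
  rcases hi with hi | hi
  · exact hne hi.symm
  · exact hne (by simpa using hi.symm)

lemma GRS.not_pos_neg (i j : N) (hij : i ≠ j) (hN : ∀ n : N, n = i ∨ n = j) (a : A) {β : N →₀ ℝ}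
    (hβ : β ∈ G.root a) (h1 : β ∈ NSpan (Set.range fun n => G.α n a))
    (h2 : -β ∈ NSpan (Set.range fun n => G.α n a)) : False := by
  obtain ⟨p, q, hpq⟩ := (G.mem_nspan i j hN a).1 h1
  obtain ⟨p', q', hpq'⟩ := (G.mem_nspan i j hN a).1 h2
  have h0 : β + -β = (p : ℝ) • G.α i a + (q : ℝ) • G.α j a
      + ((p' : ℝ) • G.α i a + (q' : ℝ) • G.α j a) := by rw [← hpq, ← hpq']
  rw [add_neg_cancel] at h0
  have h0' : ((p : ℝ) + p') • G.α i a + ((q : ℝ) + q') • G.α j a = 0 := by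
    rw [add_smul, add_smul, add_add_add_comm]
    exact h0.symm
  obtain ⟨hp, hq⟩ := G.coeff_eq_zero i j hij a h0'
  have hp0 : (p : ℝ) = 0 := by
    have := Nat.cast_nonneg (α := ℝ) p
    have := Nat.cast_nonneg (α := ℝ) p'
    linarith
  have hq0 : (q : ℝ) = 0 := by
    have := Nat.cast_nonneg (α := ℝ) q
    have := Nat.cast_nonneg (α := ℝ) q'
    linarith
  have : β = 0 := by rw [hpq, hp0, hq0]; simp
  exact G.zero_not_mem i a (this ▸ hβ)

lemma GRS.root_cases (a : A) {β : N →₀ ℝ} (hβ : β ∈ G.root a) :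
    β ∈ G.pos a ∨ -β ∈ G.pos a := by
  rw [G.ax3 a] at hβ
  rcases hβ with h | h
  · exact Or.inl h
  · exact Or.inr (Set.mem_neg.1 h)

lemma GRS.σ_root (n : N) (a : A) {β : N →₀ ℝ} (hβ : β ∈ G.root a) :
    G.σ n a β ∈ G.root (G.act n a) := by
  rw [← G.ax5_root n a]; exact ⟨β, hβ, rfl⟩

lemma GRS.wmap_root (l : List N) (a : A) {β : N →₀ ℝ} (hβ : β ∈ G.root a) :
    G.wmap l a β ∈ G.root (G.target l a) := by
  induction l with
  | nil => exact hβ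
  | cons n l ih => exact G.σ_root n (G.target l a) ih

lemma GRS.σ_pos (i j : N) (hij : i ≠ j) (hN : ∀ n : N, n = i ∨ n = j) (a : A) {β : N →₀ ℝ}
    (hβ : β ∈ G.pos a) (hne : β ≠ G.α i a) :
    G.σ i a β ∈ G.pos (G.act i a) := by
  obtain ⟨hβr, hβn⟩ := hβ
  obtain ⟨p, q, rfl⟩ := (G.mem_nspan i j hN a).1 hβn
  by_cases hq : q = 0
  · subst hq
    have hmem : ((p : ℝ) • G.α i a + ((0 : ℕ) : ℝ) • G.α j a)
        ∈ (Set.range fun r : ℝ => r • G.α i a) ∩ G.root a := ⟨⟨p, by simp⟩, hβr⟩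
    rw [G.ax4 i a] at hmem
    simp only [Set.mem_insert_iff, Set.mem_singleton_iff] at hmem
    rcases hmem with h | h
    · exact absurd h hne
    · exfalso
      refine G.not_pos_neg i j hij hN a hβr hβn ?_
      rw [h, neg_neg]
      exact (G.mem_nspan i j hN a).2 ⟨1, 0, by simp⟩
  · obtain ⟨m, hm⟩ := G.ax5_off i a j hij.symm
    have himg := G.σ_root i a hβr
    have hσ : G.σ i a ((p : ℝ) • G.α i a + (q : ℝ) • G.α j a)
        = ((q : ℝ) * m - p) • G.α i (G.act i a) + (q : ℝ) • G.α j (G.act i a) := by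
      rw [map_add, map_smul, map_smul, G.ax5_diag, hm, smul_neg, smul_add, smul_smul, sub_smul]
      abel
    rcases G.root_cases (G.act i a) himg with h | h
    · exact h
    · exfalso
      obtain ⟨p', q', hpq'⟩ := (G.mem_nspan i j hN (G.act i a)).1 h.2
      have h0 := add_neg_cancel (G.σ i a ((p : ℝ) • G.α i a + (q : ℝ) • G.α j a))
      rw [hpq', hσ] at h0
      have h0' : ((q : ℝ) * m - p + p') • G.α i (G.act i a)
          + ((q : ℝ) + q') • G.α j (G.act i a) = 0 := by
        rw [add_smul, add_smul, add_add_add_comm]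
        exact h0
      have hq2 := (G.coeff_eq_zero i j hij (G.act i a) h0').2
      have h1q : (1 : ℝ) ≤ q := Nat.one_le_cast.2 (Nat.one_le_iff_ne_zero.2 hq)
      have := Nat.cast_nonneg (α := ℝ) q'
      linarith

lemma GRS.count_le (i j : N) (hij : i ≠ j) (hN : ∀ n : N, n = i ∨ n = j) (a : A) (l : List N) :
    {β | β ∈ G.pos a ∧ G.wmap l a β ∈ -G.pos (G.target l a)}.encard ≤ l.length := by
  induction l with
  | nil =>
    have he : {β | β ∈ G.pos a ∧ G.wmap [] a β ∈ -G.pos (G.target [] a)} = ∅ := by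
      rw [Set.eq_empty_iff_forall_notMem]
      rintro β ⟨hβ, hw⟩
      have hw' : -β ∈ G.pos a := Set.mem_neg.1 hw
      exact G.not_pos_neg i j hij hN a hβ.1 hβ.2 hw'.2
    rw [he]
    simp
  | cons n l ih =>
    have hsub : {β | β ∈ G.pos a ∧ G.wmap (n :: l) a β ∈ -G.pos (G.target (n :: l) a)} ⊆
        insert ((G.wmap l a).symm (G.α n (G.target l a)))
          {β | β ∈ G.pos a ∧ G.wmap l a β ∈ -G.pos (G.target l a)} := by
      rintro β ⟨hβ, hw⟩
      have hw' : G.σ n (G.target l a) (G.wmap l a β) ∈ -G.pos (G.act n (G.target l a)) := hw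
      have hwr : G.wmap l a β ∈ G.root (G.target l a) := G.wmap_root l a hβ.1
      rcases G.root_cases (G.target l a) hwr with hp | hp
      · by_cases he : G.wmap l a β = G.α n (G.target l a)
        · refine Set.mem_insert_iff.2 (Or.inl ?_)
          rw [← he, LinearEquiv.symm_apply_apply]
        · exfalso
          have hpos : G.σ n (G.target l a) (G.wmap l a β) ∈ G.pos (G.act n (G.target l a)) := by
            rcases hN n with rfl | rfl
            · exact G.σ_pos n j hij hN (G.target l a) hp he
            · exact G.σ_pos n i hij.symm (fun x => (hN x).symm) (G.target l a) hp he
          have hneg := Set.mem_neg.1 hw'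
          exact G.not_pos_neg i j hij hN (G.act n (G.target l a)) hpos.1 hpos.2 hneg.2
      · exact Set.mem_insert_iff.2 (Or.inr ⟨hβ, Set.mem_neg.2 hp⟩)
    calc {β | β ∈ G.pos a ∧ G.wmap (n :: l) a β ∈ -G.pos (G.target (n :: l) a)}.encard
        ≤ _ := Set.encard_mono hsub
      _ ≤ _ + 1 := Set.encard_insert_le _ _
      _ ≤ (l.length : ℕ∞) + 1 := add_le_add_left ih 1
      _ = ((n :: l).length : ℕ∞) := by
          rw [List.length_cons, Nat.cast_add, Nat.cast_one]

end AuxLemmas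

/-- (rank two) if `m < d = |R⁺_a|` and `w(α_{i,a}) ∈ −R⁺_b` then
`w(α_{j,a}) ∈ R⁺_b`. -/
theorem stmt4 [Nonempty A] (G : GRS N A) (i j : N) (hij : i ≠ j)
    (hN : ∀ n : N, n = i ∨ n = j) (a : A) (l : List N)
    (hm : (l.length : ℕ∞) < (G.pos a).encard)
    (hw : G.wmap l a (G.α i a) ∈ -G.pos (G.target l a)) :
    G.wmap l a (G.α j a) ∈ G.pos (G.target l a) := by
  by_contra hcon
  have hjr : G.wmap l a (G.α j a) ∈ G.root (G.target l a) := G.wmap_root l a (G.α_mem j a)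
  have hjneg : G.wmap l a (G.α j a) ∈ -G.pos (G.target l a) := by
    rcases G.root_cases (G.target l a) hjr with h | h
    · exact absurd h hcon
    · exact Set.mem_neg.2 h
  have hall : G.pos a ⊆ {β | β ∈ G.pos a ∧ G.wmap l a β ∈ -G.pos (G.target l a)} := by
    intro β hβ
    refine ⟨hβ, ?_⟩
    obtain ⟨p, q, rfl⟩ := (G.mem_nspan i j hN a).1 hβ.2
    have hwr := G.wmap_root l a hβ.1
    have h1 : -(G.wmap l a (G.α i a))
        ∈ AddSubmonoid.closure (Set.range fun n => G.α n (G.target l a)) :=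
      (Set.mem_neg.1 hw).2
    have h2 : -(G.wmap l a (G.α j a))
        ∈ AddSubmonoid.closure (Set.range fun n => G.α n (G.target l a)) :=
      (Set.mem_neg.1 hjneg).2
    have hdec : -(G.wmap l a ((p : ℝ) • G.α i a + (q : ℝ) • G.α j a))
        = (p : ℝ) • -(G.wmap l a (G.α i a)) + (q : ℝ) • -(G.wmap l a (G.α j a)) := by
      rw [map_add, map_smul, map_smul, smul_neg, smul_neg]
      abel
    have hneg : -(G.wmap l a ((p : ℝ) • G.α i a + (q : ℝ) • G.α j a))
        ∈ NSpan (Set.range fun n => G.α n (G.target l a)) := by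
      show _ ∈ AddSubmonoid.closure _
      rw [hdec, Nat.cast_smul_eq_nsmul, Nat.cast_smul_eq_nsmul]
      exact AddSubmonoid.add_mem _ (AddSubmonoid.nsmul_mem _ h1 p) (AddSubmonoid.nsmul_mem _ h2 q)
    rcases G.root_cases (G.target l a) hwr with h | h
    · exact (G.not_pos_neg i j hij hN (G.target l a) hwr h.2 hneg).elim
    · exact Set.mem_neg.2 h
  have hle : (G.pos a).encard ≤ (l.length : ℕ∞) :=
    le_trans (Set.encard_mono hall) (G.count_le i j hij hN a l)
  exact absurd hm (not_lt.2 hle)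
end

section
/- Let a ∈ A. For n ∈ ℕ set i_n := i if n is odd and i_n := j if n is even, and set j_n := j if n is odd and j_n := i if n is even; for m ∈ ℕ₀ set a_m := i_m ⋯ i_1 ▷ a and b_m := j_m ⋯ j_1 ▷ a. Suppose R_a is infinite. Then (R^{re}_a)⁺ = { w_m(α_{i_{m+1},a_m}) : m ∈ ℕ₀ } ∪ { u_m(α_{j_{m+1},b_m}) : m ∈ ℕ₀ }, where w_m is the σ-composite of the word (i_1, …, i_m) at a_m and u_m is the σ-composite of the word (j_1, …, j_m) at b_m; moreover all the elements w_m(α_{i_{m+1},a_m}) (m ∈ ℕ₀) and u_m(α_{j_{m+1},b_m}) (m ∈ ℕ₀) are pairwise distinct. -/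
open Pointwise

variable {N : Type*} {A : Type*}

namespace GRS

variable {N A : Type*} (G : GRS N A)

noncomputable def bas (b : A) : Module.Basis N ℝ (N →₀ ℝ) :=
  Module.Basis.mk (G.α_indep b) (le_of_eq (G.α_span b).symm)

@[simp] lemma bas_apply (b : A) (n : N) : G.bas b n = G.α n b := by
  simp [GRS.bas]

noncomputable def coord (b : A) (n : N) (v : N →₀ ℝ) : ℝ := (G.bas b).repr v n

lemma repr_comb (b : A) (k l : N) (x y : ℝ) :
    (G.bas b).repr (x • G.α k b + y • G.α l b) =
      x • Finsupp.single k 1 + y • Finsupp.single l 1 := by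
  have hk : (G.bas b).repr (G.α k b) = Finsupp.single k 1 := by
    rw [← G.bas_apply b k]; exact Module.Basis.repr_self _ k
  have hl : (G.bas b).repr (G.α l b) = Finsupp.single l 1 := by
    rw [← G.bas_apply b l]; exact Module.Basis.repr_self _ l
  rw [map_add, map_smul, map_smul, hk, hl]

lemma coord_comb_k {b : A} {k l : N} (hkl : k ≠ l) (x y : ℝ) :
    G.coord b k (x • G.α k b + y • G.α l b) = x := by
  unfold coord
  rw [repr_comb]
  simp [Finsupp.single_apply, hkl.symm]

lemma coord_comb_l {b : A} {k l : N} (hkl : k ≠ l) (x y : ℝ) :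
    G.coord b l (x • G.α k b + y • G.α l b) = y := by
  unfold coord
  rw [repr_comb]
  simp [Finsupp.single_apply, hkl]

lemma coord_neg (b : A) (n : N) (v : N →₀ ℝ) : G.coord b n (-v) = - G.coord b n v := by
  simp [coord]

lemma decomp {b : A} {k l : N} (hkl : k ≠ l) (hN' : ∀ n : N, n = k ∨ n = l) (v : N →₀ ℝ) :
    v = G.coord b k v • G.α k b + G.coord b l v • G.α l b := by
  apply (G.bas b).repr.injective
  rw [repr_comb]
  ext n
  rcases hN' n with rfl | rfl
  · simp [Finsupp.single_apply, hkl.symm, coord]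
  · simp [Finsupp.single_apply, hkl, coord]

lemma mem_NSpan_iff {b : A} {k l : N} (hN' : ∀ n : N, n = k ∨ n = l) (v : N →₀ ℝ) :
    v ∈ NSpan (Set.range fun n => G.α n b) ↔
      ∃ p q : ℕ, v = (p : ℝ) • G.α k b + (q : ℝ) • G.α l b := by
  constructor
  · intro hv
    induction hv using AddSubmonoid.closure_induction with
    | mem x hx =>
      obtain ⟨n, rfl⟩ := hx
      rcases hN' n with rfl | rfl
      · exact ⟨1, 0, by simp⟩
      · exact ⟨0, 1, by simp⟩
    | zero => exact ⟨0, 0, by simp⟩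
    | add x y _ _ hx hy =>
      obtain ⟨p, q, rfl⟩ := hx
      obtain ⟨p', q', rfl⟩ := hy
      exact ⟨p + p', q + q', by push_cast; module⟩
  · rintro ⟨p, q, rfl⟩
    have h1 : G.α k b ∈ AddSubmonoid.closure (Set.range fun n => G.α n b) :=
      AddSubmonoid.subset_closure ⟨k, rfl⟩
    have h2 : G.α l b ∈ AddSubmonoid.closure (Set.range fun n => G.α n b) :=
      AddSubmonoid.subset_closure ⟨l, rfl⟩
    have := AddSubmonoid.add_mem _ (AddSubmonoid.nsmul_mem _ h1 p) (AddSubmonoid.nsmul_mem _ h2 q)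
    simpa [Nat.cast_smul_eq_nsmul, NSpan] using this

lemma coord_nonneg {b : A} {k l : N} (hkl : k ≠ l) (hN' : ∀ n : N, n = k ∨ n = l)
    {v : N →₀ ℝ} (hv : v ∈ NSpan (Set.range fun n => G.α n b)) (n : N) :
    0 ≤ G.coord b n v := by
  obtain ⟨p, q, rfl⟩ := (G.mem_NSpan_iff hN' v).1 hv
  rcases hN' n with rfl | rfl
  · rw [G.coord_comb_k hkl]; positivity
  · rw [G.coord_comb_l hkl]; positivity

lemma eq_zero_of_mem_both {b : A} {k l : N} (hkl : k ≠ l) (hN' : ∀ n : N, n = k ∨ n = l)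
    {v : N →₀ ℝ} (h1 : v ∈ NSpan (Set.range fun n => G.α n b))
    (h2 : -v ∈ NSpan (Set.range fun n => G.α n b)) : v = 0 := by
  have hk : G.coord b k v = 0 := by
    have a1 := G.coord_nonneg hkl hN' h1 k
    have a2 := G.coord_nonneg hkl hN' h2 k
    rw [G.coord_neg] at a2; linarith
  have hl : G.coord b l v = 0 := by
    have a1 := G.coord_nonneg hkl hN' h1 l
    have a2 := G.coord_nonneg hkl hN' h2 l
    rw [G.coord_neg] at a2; linarith
  have := G.decomp hkl hN' (b := b) v
  rw [hk, hl] at this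
  simpa using this

lemma α_ne_zero (b : A) (n : N) : G.α n b ≠ 0 := (G.α_indep b).ne_zero n

lemma α_ne {b : A} {k l : N} (hkl : k ≠ l) : G.α k b ≠ G.α l b :=
  fun h => hkl ((G.α_indep b).injective h)

lemma root_pm {b : A} {β : N →₀ ℝ} (hβ : β ∈ G.root b) :
    β ∈ NSpan (Set.range fun n => G.α n b) ∨ -β ∈ NSpan (Set.range fun n => G.α n b) := by
  rw [G.ax3 b] at hβ
  rcases hβ with h | h
  · exact Or.inl h.2
  · exact Or.inr (Set.mem_neg.1 h).2

lemma root_line {b : A} {k l : N} (hkl : k ≠ l) (hN' : ∀ n : N, n = k ∨ n = l)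
    {β : N →₀ ℝ} (hR : β ∈ G.root b) {x : ℝ} (hx : β = x • G.α k b)
    (hNS : β ∈ NSpan (Set.range fun n => G.α n b)) : β = G.α k b := by
  have hmem : β ∈ (Set.range fun r : ℝ => r • G.α k b) ∩ G.root b := ⟨⟨x, hx.symm⟩, hR⟩
  rw [G.ax4 k b] at hmem
  rcases hmem with h | h
  · exact h
  · exfalso
    have hc := G.coord_nonneg hkl hN' hNS k
    rw [show β = -G.α k b from h] at hc
    have : G.coord b k (G.α k b) = 1 := by
      have := G.coord_comb_k (b := b) hkl (1 : ℝ) (0 : ℝ) (l := l)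
      simpa using this
    rw [G.coord_neg, this] at hc
    linarith

end GRS
namespace GRS

variable {N A : Type*} (G : GRS N A)

/-- Key step: σ_k maps a positive root other than α_k to a positive root with
positive l-coordinate. -/
lemma sigma_step {b : A} {k l : N} (hkl : k ≠ l) (hN' : ∀ n : N, n = k ∨ n = l)
    {β : N →₀ ℝ} (hR : β ∈ G.root b) (hNS : β ∈ NSpan (Set.range fun n => G.α n b))
    (hne : β ≠ G.α k b) :
    G.σ k b β ∈ G.root (G.act k b) ∧
    G.σ k b β ∈ NSpan (Set.range fun n => G.α n (G.act k b)) ∧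
    0 < G.coord (G.act k b) l (G.σ k b β) := by
  obtain ⟨p, q, hβ⟩ := (G.mem_NSpan_iff hN' β).1 hNS
  have hq : q ≠ 0 := by
    rintro rfl
    apply hne
    refine G.root_line hkl hN' hR (x := (p : ℝ)) ?_ hNS
    rw [hβ]; simp
  obtain ⟨c, hc⟩ := G.ax5_off k b l (Ne.symm hkl)
  have hroot : G.σ k b β ∈ G.root (G.act k b) := by
    rw [← G.ax5_root]; exact ⟨β, hR, rfl⟩
  have himg : G.σ k b β =
      ((q : ℝ) * c - p) • G.α k (G.act k b) + (q : ℝ) • G.α l (G.act k b) := by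
    rw [hβ, map_add, map_smul, map_smul, G.ax5_diag, hc]
    module
  have hcoordl : G.coord (G.act k b) l (G.σ k b β) = (q : ℝ) := by
    rw [himg, G.coord_comb_l hkl]
  have hqpos : (0 : ℝ) < q := by exact_mod_cast Nat.pos_of_ne_zero hq
  have hNS' : G.σ k b β ∈ NSpan (Set.range fun n => G.α n (G.act k b)) := by
    rcases G.root_pm hroot with h | h
    · exact h
    · exfalso
      have := G.coord_nonneg hkl hN' h l
      rw [G.coord_neg, hcoordl] at this
      linarith
  exact ⟨hroot, hNS', by rw [hcoordl]; exact hqpos⟩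

lemma wmap_nil (b : A) (v : N →₀ ℝ) : G.wmap [] b v = v := rfl

lemma wmap_cons (k : N) (w : List N) (b : A) (v : N →₀ ℝ) :
    G.wmap (k :: w) b v = G.σ k (G.target w b) (G.wmap w b v) := rfl

lemma target_nil (b : A) : G.target [] b = b := rfl

lemma target_cons (k : N) (w : List N) (b : A) :
    G.target (k :: w) b = G.act k (G.target w b) := rfl

lemma target_append_single (w : List N) (x : N) (b : A) :
    G.target (w ++ [x]) b = G.target w (G.act x b) := by
  simp [GRS.target, List.foldr_append]

lemma wmap_append_single (w : List N) (x : N) (b : A) (v : N →₀ ℝ) :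
    G.wmap (w ++ [x]) b v = G.wmap w (G.act x b) (G.σ x b v) := by
  induction w with
  | nil => rfl
  | cons y w ih =>
    rw [List.cons_append, wmap_cons, ih, wmap_cons, target_append_single]

lemma root_wmap (w : List N) (b : A) {β : N →₀ ℝ} (hβ : β ∈ G.root b) :
    G.wmap w b β ∈ G.root (G.target w b) := by
  induction w with
  | nil => exact hβ
  | cons k w ih =>
    rw [wmap_cons, target_cons, ← G.ax5_root]
    exact ⟨_, ih, rfl⟩

lemma root_target_eq (w : List N) (b : A) :
    G.root (G.target w b) = ⇑(G.wmap w b) '' G.root b := by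
  induction w with
  | nil =>
    simp [GRS.target, GRS.wmap]
    exact (Set.image_id _).symm
  | cons k w ih =>
    rw [target_cons, ← G.ax5_root, ih, ← Set.image_comp]
    rfl

lemma inf_all {a : A} (hinf : (G.root a).Infinite) (b : A) : (G.root b).Infinite := by
  obtain ⟨w, hw⟩ := G.act_trans a b
  have hb : G.target w a = b := hw
  rw [← hb, G.root_target_eq w a]
  exact hinf.image ((G.wmap w a).injective.injOn)

end GRS
namespace GRS

variable {N A : Type*} (G : GRS N A)

/-- The `m`-th element of the alternating real-root sequence at `a` starting with letter `k`. -/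
noncomputable def Gam (k l : N) (a : A) (m : ℕ) : N →₀ ℝ :=
  G.wmap (altList k l m) (aIter G.act k l a m)
    (G.α (if m % 2 = 0 then k else l) (aIter G.act k l a m))

lemma ifpar {α : Type*} (k l : α) (u : ℕ) :
    (if (u + 1) % 2 = 0 then k else l) = (if u % 2 = 0 then l else k) := by
  by_cases h : u % 2 = 0
  · rw [if_neg (by omega), if_pos h]
  · rw [if_pos (by omega), if_neg h]

lemma aIter_succ_eq (act : N → A → A) (k l : N) (a : A) (m : ℕ) :
    aIter act k l a (m + 1) = aIter act l k (act k a) m := by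
  induction m generalizing k l a with
  | zero => rfl
  | succ m ih =>
    show act _ (aIter act k l a (m + 1)) = act _ (aIter act l k (act k a) m)
    rw [ih, ifpar]

lemma target_altList (k l : N) (a : A) (m : ℕ) :
    G.target (altList k l m) (aIter G.act k l a m) = a := by
  induction m generalizing k l a with
  | zero => rfl
  | succ m ih =>
    rw [aIter_succ_eq]
    show G.target (k :: altList l k m) _ = a
    rw [target_cons, ih, G.act_invol]

lemma Gam_zero (k l : N) (a : A) : G.Gam k l a 0 = G.α k a := rfl

lemma Gam_succ (k l : N) (a : A) (m : ℕ) :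
    G.Gam k l a (m + 1) = G.σ k (G.act k a) (G.Gam l k (G.act k a) m) := by
  unfold Gam
  rw [aIter_succ_eq]
  show G.wmap (k :: altList l k m) _ _ = _
  rw [wmap_cons, target_altList, ifpar]

/-- "push-up": applying σ_l at b to the sequence at `b` gives the sequence at `l ▷ b`. -/
lemma Gam_pushup (k l : N) (b : A) (m : ℕ) :
    G.Gam l k (G.act l b) (m + 1) = G.σ l b (G.Gam k l b m) := by
  have := G.Gam_succ l k (G.act l b) m
  rwa [G.act_invol] at this

/-- "strip": inverse form of the recursion. -/
lemma Gam_strip (k l : N) (a : A) (m : ℕ) :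
    G.σ k a (G.Gam k l a (m + 1)) = G.Gam l k (G.act k a) m := by
  rw [Gam_succ]
  have := G.ax6 k (G.act k a) (G.Gam l k (G.act k a) m)
  rwa [G.act_invol] at this

lemma altList_append (k l : N) (s : ℕ) :
    altList k l (s + 1) = altList k l s ++ [if s % 2 = 0 then k else l] := by
  induction s generalizing k l with
  | zero => rfl
  | succ s ih =>
    show k :: altList l k (s + 1) = (k :: altList l k s) ++ _
    rw [ih, ifpar, List.cons_append]

lemma aIter_add (act : N → A → A) (k l : N) (b : A) (u s : ℕ) :
    aIter act k l b (u + s) =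
      aIter act (if u % 2 = 0 then k else l) (if u % 2 = 0 then l else k)
        (aIter act k l b u) s := by
  induction s with
  | zero => rfl
  | succ s ih =>
    show act _ (aIter act k l b (u + s)) = act _ _
    rw [ih]
    congr 1
    by_cases hu : u % 2 = 0 <;> by_cases hs : s % 2 = 0 <;>
      simp [hu, hs, Nat.add_mod, if_neg, if_pos] <;> omega

/-- The key push formula: `Gam k l b (m+s)` is the image of the sequence at depth `s`. -/
lemma Gam_push (k l : N) (b : A) (s m : ℕ) :
    G.Gam k l b (m + s) =
      G.wmap (altList k l s) (aIter G.act k l b s)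
        (G.Gam (if s % 2 = 0 then k else l) (if s % 2 = 0 then l else k)
          (aIter G.act k l b s) m) := by
  induction s generalizing m with
  | zero => rfl
  | succ s ih =>
    have h1 : m + (s + 1) = (m + 1) + s := by omega
    rw [h1, ih]
    rw [Gam_succ]
    have hact : G.act (if s % 2 = 0 then k else l) (aIter G.act k l b s) =
        aIter G.act k l b (s + 1) := rfl
    rw [hact]
    have hw : ∀ v, G.wmap (altList k l (s + 1)) (aIter G.act k l b (s + 1)) v =
        G.wmap (altList k l s) (aIter G.act k l b s)
          (G.σ (if s % 2 = 0 then k else l) (aIter G.act k l b (s + 1)) v) := by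
      intro v
      rw [altList_append, wmap_append_single]
      congr 2
      show G.act _ (G.act _ _) = _
      rw [G.act_invol]
    rw [hw, ifpar k l s, ifpar l k s]

end GRS
namespace GRS

variable {N A : Type*} (G : GRS N A)

lemma if_ne' {k l : N} (hkl : k ≠ l) (u : ℕ) :
    (if u % 2 = 0 then k else l) ≠ (if u % 2 = 0 then l else k) := by
  by_cases h : u % 2 = 0 <;> simp [h, hkl, hkl.symm]

lemma if_pair {k l : N} (hN' : ∀ n : N, n = k ∨ n = l) (u : ℕ) (n : N) :
    n = (if u % 2 = 0 then k else l) ∨ n = (if u % 2 = 0 then l else k) := by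
  by_cases h : u % 2 = 0
  · simpa [h] using hN' n
  · simpa [h] using (hN' n).symm

/-- Positivity of the alternating sequence, given no degeneracy strictly below `M`. -/
lemma posAux (M : ℕ)
    (hnd : ∀ r, 0 < r → r < M → ∀ (k l : N) (c : A), k ≠ l → (∀ n : N, n = k ∨ n = l) →
      G.Gam k l c r ≠ G.α l c) :
    ∀ (k l : N) (c : A), k ≠ l → (∀ n : N, n = k ∨ n = l) →
      (G.Gam k l c M ∈ G.root c ∧ G.Gam k l c M ∈ NSpan (Set.range fun n => G.α n c)) ∧
      (0 < M → 0 < G.coord c l (G.Gam k l c M)) := by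
  induction M with
  | zero =>
    intro k l c hkl hN'
    refine ⟨⟨G.α_mem k c, ?_⟩, by omega⟩
    exact (G.mem_NSpan_iff hN' _).2 ⟨1, 0, by simp [Gam_zero]⟩
  | succ M ih =>
    intro k l c hkl hN'
    have hN'' : ∀ n : N, n = l ∨ n = k := fun n => (hN' n).symm
    have hX := ih (fun r h1 h2 => hnd r h1 (by omega)) l k (G.act k c) hkl.symm hN''
    have hne : G.Gam l k (G.act k c) M ≠ G.α k (G.act k c) := by
      rcases Nat.eq_zero_or_pos M with rfl | hM
      · rw [Gam_zero]; exact G.α_ne hkl.symm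
      · exact hnd M hM (by omega) l k (G.act k c) hkl.symm hN''
    have hstep := G.sigma_step (b := G.act k c) (k := k) (l := l) hkl hN' hX.1.1 hX.1.2 hne
    rw [G.act_invol k c] at hstep
    rw [G.Gam_succ k l c M]
    exact ⟨⟨hstep.1, hstep.2.1⟩, fun _ => hstep.2.2⟩

/-- The partial push map from depth `r` up by `s` steps along the alternating chain. -/
noncomputable def PM (k l : N) (b : A) (r s : ℕ) : (N →₀ ℝ) ≃ₗ[ℝ] (N →₀ ℝ) :=
  G.wmap (altList (if (r - s) % 2 = 0 then k else l) (if (r - s) % 2 = 0 then l else k) s)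
    (aIter G.act k l b r)

lemma PM_zero (k l : N) (b : A) (r : ℕ) (v : N →₀ ℝ) : G.PM k l b r 0 v = v := rfl

lemma PM_target {k l : N} {b : A} {r s : ℕ} (hs : s ≤ r) :
    G.target (altList (if (r - s) % 2 = 0 then k else l) (if (r - s) % 2 = 0 then l else k) s)
      (aIter G.act k l b r) = aIter G.act k l b (r - s) := by
  have h2 := aIter_add G.act k l b (r - s) s
  rw [show r - s + s = r by omega] at h2
  have h := G.target_altList (if (r - s) % 2 = 0 then k else l)
    (if (r - s) % 2 = 0 then l else k) (aIter G.act k l b (r - s)) s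
  rw [← h2] at h
  exact h

lemma PM_succ {k l : N} {b : A} {r s : ℕ} (hs : s < r) (v : N →₀ ℝ) :
    G.PM k l b r (s + 1) v =
      G.σ (if (r - (s + 1)) % 2 = 0 then k else l) (aIter G.act k l b (r - s))
        (G.PM k l b r s v) := by
  have e1 : (if (r - s) % 2 = 0 then k else l) = (if (r - (s + 1)) % 2 = 0 then l else k) := by
    rw [show r - s = (r - (s + 1)) + 1 by omega, ifpar]
  have e2 : (if (r - s) % 2 = 0 then l else k) = (if (r - (s + 1)) % 2 = 0 then k else l) := by
    rw [show r - s = (r - (s + 1)) + 1 by omega, ifpar]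
  have hx : altList (if (r - (s + 1)) % 2 = 0 then k else l)
      (if (r - (s + 1)) % 2 = 0 then l else k) (s + 1)
      = (if (r - (s + 1)) % 2 = 0 then k else l) ::
        altList (if (r - s) % 2 = 0 then k else l) (if (r - s) % 2 = 0 then l else k) s := by
    rw [e1, e2]; rfl
  show G.wmap _ _ v = _
  rw [hx, wmap_cons, G.PM_target (le_of_lt hs)]
  rfl

lemma act_aIter_succ (k l : N) (b : A) (u : ℕ) :
    G.act (if u % 2 = 0 then k else l) (aIter G.act k l b (u + 1)) = aIter G.act k l b u := by
  show G.act _ (G.act _ _) = _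
  rw [G.act_invol]

/-- No degeneracy: the alternating sequence never returns to the other simple root. -/
lemma noDeg (hia : ∀ b, (G.root b).Infinite) :
    ∀ r, 0 < r → ∀ (k l : N) (c : A), k ≠ l → (∀ n : N, n = k ∨ n = l) →
      G.Gam k l c r ≠ G.α l c := by
  intro r
  induction r using Nat.strong_induction_on with
  | _ r IH =>
  intro hr k l b hkl hN' hdeg
  have hnd : ∀ r', 0 < r' → r' < r → ∀ (k' l' : N) (c' : A), k' ≠ l' →
      (∀ n : N, n = k' ∨ n = l') → G.Gam k' l' c' r' ≠ G.α l' c' :=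
    fun r' h1 h2 => IH r' h2 h1
  have hpos : ∀ M, M ≤ r → ∀ (k' l' : N) (c' : A), k' ≠ l' → (∀ n : N, n = k' ∨ n = l') →
      (G.Gam k' l' c' M ∈ G.root c' ∧
        G.Gam k' l' c' M ∈ NSpan (Set.range fun n => G.α n c')) ∧
      (0 < M → 0 < G.coord c' l' (G.Gam k' l' c' M)) :=
    fun M hM => G.posAux M (fun r' h1 h2 => hnd r' h1 (by omega))
  set Bad : Set (N →₀ ℝ) :=
    {x | ∃ s, s < r ∧ x = (G.PM k l b r s).symm
        (G.α (if (r - s) % 2 = 0 then l else k) (aIter G.act k l b (r - s)))} ∪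
    {G.α (if r % 2 = 0 then k else l) (aIter G.act k l b r)} with hBadDef
  have hr1 : r = (r - 1) + 1 := by omega
  have hclaim : ∀ β, β ∈ G.root (aIter G.act k l b r) →
      β ∈ NSpan (Set.range fun n => G.α n (aIter G.act k l b r)) → β ∈ Bad := by
    intro β hβR hβNS
    by_contra hB
    have hpush : ∀ s, s ≤ r → (G.PM k l b r s β ∈ G.root (aIter G.act k l b (r - s)) ∧
        G.PM k l b r s β ∈ NSpan (Set.range fun n => G.α n (aIter G.act k l b (r - s)))) := by
      intro s
      induction s with
      | zero =>
        intro _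
        rw [Nat.sub_zero]
        exact ⟨by rw [PM_zero]; exact hβR, by rw [PM_zero]; exact hβNS⟩
      | succ s ihs =>
        intro hs
        obtain ⟨h1, h2⟩ := ihs (by omega)
        have hslt : s < r := by omega
        have hnea : G.PM k l b r s β ≠
            G.α (if (r - (s + 1)) % 2 = 0 then k else l) (aIter G.act k l b (r - s)) := by
          intro heq
          apply hB
          rw [hBadDef]
          left
          refine ⟨s, hslt, ?_⟩
          rw [show (if (r - s) % 2 = 0 then l else k)
              = (if (r - (s + 1)) % 2 = 0 then k else l) from by
            rw [show r - s = (r - (s + 1)) + 1 by omega, ifpar]]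
          rw [← heq, LinearEquiv.symm_apply_apply]
        have hstep := G.sigma_step (b := aIter G.act k l b (r - s))
          (k := if (r - (s + 1)) % 2 = 0 then k else l)
          (l := if (r - (s + 1)) % 2 = 0 then l else k)
          (if_ne' hkl _) (if_pair hN' _) h1 h2 hnea
        have hact : G.act (if (r - (s + 1)) % 2 = 0 then k else l) (aIter G.act k l b (r - s))
            = aIter G.act k l b (r - (s + 1)) := by
          rw [show r - s = (r - (s + 1)) + 1 by omega]
          exact G.act_aIter_succ k l b (r - (s + 1))
        rw [hact] at hstep
        rw [G.PM_succ hslt]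
        exact ⟨hstep.1, hstep.2.1⟩
    have h0 := hpush r le_rfl
    rw [Nat.sub_self] at h0
    rw [show aIter G.act k l b 0 = b from rfl] at h0
    have hkr := if_ne' (N := N) hkl r
    have hNr := if_pair hN' r
    obtain ⟨p, q, hβ⟩ := (G.mem_NSpan_iff hNr β).1 hβNS
    by_cases hq : q = 0
    · apply hB
      subst hq
      have hline : β = G.α (if r % 2 = 0 then k else l) (aIter G.act k l b r) := by
        refine G.root_line hkr hNr hβR (x := (p : ℝ)) ?_ hβNS
        rw [hβ]; simp
      rw [hBadDef]
      right
      simpa using hline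
    -- image of the first simple root under the full push
    have hPMk : G.PM k l b r r (G.α (if r % 2 = 0 then k else l) (aIter G.act k l b r))
        = G.α l b := by
      have hp := G.Gam_push k l b r 0
      rw [Nat.zero_add] at hp
      have h2 : G.PM k l b r r (G.α (if r % 2 = 0 then k else l) (aIter G.act k l b r))
          = G.Gam k l b r := by
        rw [hp, Gam_zero]
        show G.wmap _ _ _ = _
        rw [Nat.sub_self]
        simp
      rw [h2, hdeg]
    -- image of the second simple root under the full push
    have hPMl : G.PM k l b r r (G.α (if r % 2 = 0 then l else k) (aIter G.act k l b r))
        = - G.Gam k l b (r - 1) := by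
      have hlet : (if r % 2 = 0 then l else k) = (if (r - 1) % 2 = 0 then k else l) := by
        conv_lhs => rw [hr1]
        rw [ifpar]
      have hact1 := G.act_aIter_succ k l b (r - 1)
      rw [← hr1] at hact1
      have hPM' : ∀ v, G.PM k l b r r v =
          G.wmap (altList k l (r - 1)) (aIter G.act k l b (r - 1))
            (G.σ (if (r - 1) % 2 = 0 then k else l) (aIter G.act k l b r) v) := by
        intro v
        show G.wmap _ _ v = _
        rw [Nat.sub_self]
        norm_num
        rw [show altList k l r = altList k l (r - 1) ++ [if (r - 1) % 2 = 0 then k else l] from by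
          conv_lhs => rw [hr1]
          rw [altList_append]]
        rw [wmap_append_single, hact1]
      rw [hPM', hlet, G.ax5_diag, hact1, map_neg]
      congr 1
    -- decompose Gam (r-1)
    have hgm := (hpos (r - 1) (by omega) k l b hkl hN').1
    obtain ⟨x, y, hgxy⟩ := (G.mem_NSpan_iff hN' _).1 hgm.2
    have hPMβ : G.PM k l b r r β =
        (-((q : ℝ) * x)) • G.α k b + ((p : ℝ) - (q : ℝ) * y) • G.α l b := by
      rw [hβ, map_add, map_smul, map_smul, hPMk, hPMl, hgxy]
      module
    have hcoordk := G.coord_nonneg hkl hN' h0.2 k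
    rw [hPMβ, G.coord_comb_k hkl] at hcoordk
    have hxq : (q : ℝ) * x = 0 := le_antisymm (by linarith) (by positivity)
    have hx0 : (x : ℝ) = 0 := by
      rcases mul_eq_zero.1 hxq with h | h
      · exact absurd (Nat.cast_eq_zero.1 h) hq
      · exact h
    have hgl : G.Gam k l b (r - 1) = (y : ℝ) • G.α l b := by
      rw [hgxy, hx0]; simp
    have hγα := G.root_line (k := l) (l := k) hkl.symm (fun n => (hN' n).symm)
      hgm.1 hgl hgm.2
    rcases Nat.eq_zero_or_pos (r - 1) with h0' | hp'
    · rw [h0', Gam_zero] at hγα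
      exact G.α_ne hkl hγα
    · exact hnd (r - 1) hp' (by omega) k l b hkl hN' hγα
  -- Bad is finite
  have hBadfin : Bad.Finite := by
    rw [hBadDef]
    apply Set.Finite.union
    · apply Set.Finite.subset (Set.finite_range
        (fun s : Fin r => (G.PM k l b r s.1).symm
          (G.α (if (r - s.1) % 2 = 0 then l else k) (aIter G.act k l b (r - s.1)))))
      rintro x ⟨s, hs, rfl⟩
      exact ⟨⟨s, hs⟩, rfl⟩
    · exact Set.finite_singleton _
  have hroot_sub : G.root (aIter G.act k l b r) ⊆ Bad ∪ -Bad := by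
    intro β hβ
    rw [G.ax3 (aIter G.act k l b r)] at hβ
    rcases hβ with h | h
    · exact Or.inl (hclaim β h.1 h.2)
    · right
      rw [Set.mem_neg]
      have h' := Set.mem_neg.1 h
      exact hclaim (-β) h'.1 h'.2
  exact hia (aIter G.act k l b r) (Set.Finite.subset (hBadfin.union hBadfin.neg) hroot_sub)

end GRS
namespace GRS

variable {N A : Type*} (G : GRS N A)

lemma POS (hia : ∀ b, (G.root b).Infinite) (M : ℕ) (k l : N) (c : A)
    (hkl : k ≠ l) (hN' : ∀ n : N, n = k ∨ n = l) :
    (G.Gam k l c M ∈ G.root c ∧ G.Gam k l c M ∈ NSpan (Set.range fun n => G.α n c)) ∧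
    (0 < M → 0 < G.coord c l (G.Gam k l c M)) :=
  G.posAux M (fun r h1 _ => G.noDeg hia r h1) k l c hkl hN'

lemma Gam_inj1 (hia : ∀ b, (G.root b).Infinite) :
    ∀ (m : ℕ) (k l : N) (c : A), k ≠ l → (∀ n : N, n = k ∨ n = l) →
      ∀ d, 0 < d → G.Gam k l c m ≠ G.Gam k l c (m + d) := by
  intro m
  induction m with
  | zero =>
    intro k l c hkl hN' d hd hcon
    have h1 := (G.POS hia d k l c hkl hN').2 hd
    rw [Nat.zero_add] at hcon
    rw [← hcon, Gam_zero] at h1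
    have h2 : G.coord c l ((1 : ℝ) • G.α k c + (0 : ℝ) • G.α l c) = 0 := G.coord_comb_l hkl 1 0
    simp only [one_smul, zero_smul, add_zero] at h2
    rw [h2] at h1
    exact lt_irrefl 0 h1
  | succ m ih =>
    intro k l c hkl hN' d hd hcon
    rw [show m + 1 + d = (m + d) + 1 by omega] at hcon
    have h := congrArg (G.σ k c) hcon
    rw [G.Gam_strip, G.Gam_strip] at h
    exact ih l k (G.act k c) hkl.symm (fun n => (hN' n).symm) d hd h

lemma Gam_inj_eq (hia : ∀ b, (G.root b).Infinite) {k l : N} {c : A}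
    (hkl : k ≠ l) (hN' : ∀ n : N, n = k ∨ n = l) {m m' : ℕ}
    (h : G.Gam k l c m = G.Gam k l c m') : m = m' := by
  rcases lt_trichotomy m m' with hlt | heq | hgt
  · exfalso
    apply G.Gam_inj1 hia m k l c hkl hN' (m' - m) (by omega)
    rw [show m + (m' - m) = m' by omega]
    exact h
  · exact heq
  · exfalso
    apply G.Gam_inj1 hia m' k l c hkl hN' (m - m') (by omega)
    rw [show m' + (m - m') = m by omega]
    exact h.symm

lemma Gam_cross (hia : ∀ b, (G.root b).Infinite) :
    ∀ (m' m : ℕ) (k l : N) (c : A), k ≠ l → (∀ n : N, n = k ∨ n = l) →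
      G.Gam k l c m ≠ G.Gam l k c m' := by
  intro m'
  induction m' with
  | zero =>
    intro m k l c hkl hN' hcon
    rw [Gam_zero] at hcon
    rcases Nat.eq_zero_or_pos m with rfl | hm
    · rw [Gam_zero] at hcon
      exact G.α_ne hkl hcon
    · exact G.noDeg hia m hm k l c hkl hN' hcon
  | succ m' ih =>
    intro m k l c hkl hN' hcon
    have h2 := congrArg (G.σ l c) hcon
    rw [G.Gam_strip l k c m'] at h2
    rw [← G.Gam_pushup k l c m] at h2
    exact ih (m + 1) l k (G.act l c) hkl.symm (fun n => (hN' n).symm) h2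

/-- One cons-step of the classification of positive real roots. -/
lemma consStep (hia : ∀ b, (G.root b).Infinite) (x y : N) (hxy : x ≠ y)
    (hN' : ∀ n : N, n = x ∨ n = y) (b'' : A) (β' : N →₀ ℝ)
    (hβ'root : β' ∈ G.root b'')
    (hIH : β' ∈ NSpan (Set.range fun n => G.α n b'') →
      (∃ m, β' = G.Gam x y b'' m) ∨ (∃ m, β' = G.Gam y x b'' m))
    (hNS : G.σ x b'' β' ∈ NSpan (Set.range fun n => G.α n (G.act x b''))) :
    (∃ m, G.σ x b'' β' = G.Gam x y (G.act x b'') m) ∨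
    (∃ m, G.σ x b'' β' = G.Gam y x (G.act x b'') m) := by
  have hβroot : G.σ x b'' β' ∈ G.root (G.act x b'') := by
    rw [← G.ax5_root]; exact ⟨β', hβ'root, rfl⟩
  by_cases hβα : G.σ x b'' β' = G.α x (G.act x b'')
  · exact Or.inl ⟨0, by rw [hβα, Gam_zero]⟩
  · have hstep := G.sigma_step (b := G.act x b'') (k := x) (l := y) hxy hN' hβroot hNS hβα
    have hback : G.σ x (G.act x b'') (G.σ x b'' β') = β' := G.ax6 x b'' β'
    have hNSβ' : β' ∈ NSpan (Set.range fun n => G.α n b'') := by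
      have h := hstep.2.1
      rw [G.act_invol, hback] at h
      exact h
    rcases hIH hNSβ' with ⟨m, hm⟩ | ⟨m, hm⟩
    · rcases m with _ | m''
      · exfalso
        rw [Gam_zero] at hm
        have hβeq : G.σ x b'' β' = -G.α x (G.act x b'') := by
          rw [hm, G.ax5_diag]
        have hαNS : -(G.σ x b'' β') ∈
            NSpan (Set.range fun n => G.α n (G.act x b'')) := by
          rw [hβeq, neg_neg]
          exact (G.mem_NSpan_iff hN' _).2 ⟨1, 0, by simp⟩
        have h0 := G.eq_zero_of_mem_both hxy hN' hNS hαNS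
        rw [hβeq] at h0
        exact G.α_ne_zero (G.act x b'') x (neg_eq_zero.1 h0)
      · right
        refine ⟨m'', ?_⟩
        rw [hm, G.Gam_succ x y b'' m'']
        have h6 := G.ax6 x (G.act x b'') (G.Gam y x (G.act x b'') m'')
        rw [G.act_invol] at h6
        exact h6
    · left
      refine ⟨m + 1, ?_⟩
      rw [hm]
      exact (G.Gam_pushup y x b'' m).symm

/-- Classification: every positive real root is a member of one of the two
alternating sequences. -/
lemma classify (hia : ∀ b, (G.root b).Infinite) (i j : N) (hij : i ≠ j)
    (hN : ∀ n : N, n = i ∨ n = j) :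
    ∀ (w : List N) (c : A) (n : N) (a' : A), G.target w c = a' →
      G.wmap w c (G.α n c) ∈ NSpan (Set.range fun n => G.α n a') →
      (∃ m, G.wmap w c (G.α n c) = G.Gam i j a' m) ∨
      (∃ m, G.wmap w c (G.α n c) = G.Gam j i a' m) := by
  intro w
  induction w with
  | nil =>
    intro c n a' htar _
    rw [target_nil] at htar
    subst htar
    rw [wmap_nil]
    rcases hN n with rfl | rfl
    · exact Or.inl ⟨0, (G.Gam_zero n j c).symm⟩
    · exact Or.inr ⟨0, (G.Gam_zero n i c).symm⟩
  | cons x w ih =>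
    intro c n a' htar hNS
    rw [target_cons] at htar
    subst htar
    rw [wmap_cons] at hNS ⊢
    have hβ'root := G.root_wmap w c (G.α_mem n c)
    rcases hN x with rfl | rfl
    · exact G.consStep hia x j hij hN (G.target w c) _ hβ'root
        (fun h => ih c n (G.target w c) rfl h) hNS
    · exact Or.symm (G.consStep hia x i hij.symm (fun n => (hN n).symm) (G.target w c) _
        hβ'root (fun h => Or.symm (ih c n (G.target w c) rfl h)) hNS)

end GRS
/-- (rank two, `R_a` infinite) description of `(R^{re}_a)⁺` via the two
alternating sequences, all of whose members are pairwise distinct. -/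
theorem stmt6 [Nonempty A] (G : GRS N A) (i j : N) (hij : i ≠ j)
    (hN : ∀ n : N, n = i ∨ n = j) (a : A) (hinf : (G.root a).Infinite) :
    (G.reroot a ∩ NSpan (Set.range fun n => G.α n a) =
      {β | ∃ m : ℕ, β = G.wmap (altList i j m) (aIter G.act i j a m)
          (G.α (if m % 2 = 0 then i else j) (aIter G.act i j a m))} ∪
      {β | ∃ m : ℕ, β = G.wmap (altList j i m) (aIter G.act j i a m)
          (G.α (if m % 2 = 0 then j else i) (aIter G.act j i a m))}) ∧
    Function.Injective (Sum.elim
      (fun m : ℕ => G.wmap (altList i j m) (aIter G.act i j a m)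
          (G.α (if m % 2 = 0 then i else j) (aIter G.act i j a m)))
      (fun m : ℕ => G.wmap (altList j i m) (aIter G.act j i a m)
          (G.α (if m % 2 = 0 then j else i) (aIter G.act j i a m)))) := by
  have hia : ∀ b, (G.root b).Infinite := G.inf_all hinf
  have hN' : ∀ n : N, n = j ∨ n = i := fun n => (hN n).symm
  constructor
  · ext β
    constructor
    · rintro ⟨⟨c, w, n, htar, hβ⟩, hNS⟩
      subst hβ
      rcases G.classify hia i j hij hN w c n a htar hNS with ⟨m, hm⟩ | ⟨m, hm⟩
      · exact Or.inl ⟨m, hm⟩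
      · exact Or.inr ⟨m, hm⟩
    · rintro (⟨m, rfl⟩ | ⟨m, rfl⟩)
      · exact ⟨⟨aIter G.act i j a m, altList i j m, _, G.target_altList i j a m, rfl⟩,
          (G.POS hia m i j a hij hN).1.2⟩
      · exact ⟨⟨aIter G.act j i a m, altList j i m, _, G.target_altList j i a m, rfl⟩,
          (G.POS hia m j i a hij.symm hN').1.2⟩
  · intro u v huv
    match u, v with
    | Sum.inl m, Sum.inl m' =>
      have huv' : G.Gam i j a m = G.Gam i j a m' := huv
      exact congrArg Sum.inl (G.Gam_inj_eq hia hij hN huv')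
    | Sum.inl m, Sum.inr m' =>
      have huv' : G.Gam i j a m = G.Gam j i a m' := huv
      exact absurd huv' (G.Gam_cross hia m' m i j a hij hN)
    | Sum.inr m, Sum.inl m' =>
      have huv' : G.Gam i j a m' = G.Gam j i a m := huv.symm
      exact absurd huv' (G.Gam_cross hia m m' i j a hij hN)
    | Sum.inr m, Sum.inr m' =>
      have huv' : G.Gam j i a m = G.Gam j i a m' := huv
      exact congrArg Sum.inr (G.Gam_inj_eq hia hij.symm hN' huv')
end
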